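/- Let U ∈ ℝ^{Ñ×d} have orthonormal columns with d ≥ 1, where Ñ = J·N, with row blocks U_j ∈ ℝ^{N×d}. Then max_{1 ≤ j ≤ J} Γ(U_j) ≥ 1/J, where Γ(U_j) = min(N·‖U_j‖_∞², ‖U_j‖²). -/

import Mathlib

open MeasureTheory ProbabilityTheory Matrix
open scoped NNReal ENNReal BigOperators

noncomputable section

/-- The spectral (`ℓ²` operator) norm of a real matrix. -/
def specNorm {m n : Type*} [Fintype m] [Fintype n] [DecidableEq n] (A : Matrix m n ℝ) : ℝ :=
  ‖LinearMap.toContinuousLinearMap (Matrix.toEuclideanLin A)‖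

/-- The Frobenius norm of a real matrix. -/
def frobNorm {m n : Type*} [Fintype m] [Fintype n] (A : Matrix m n ℝ) : ℝ :=
  Real.sqrt (∑ i, ∑ j, (A i j) ^ 2)

/-- The entrywise sup ("infinity") norm of a real matrix. -/
def entrySup {m n : Type*} [Fintype m] [Fintype n] (A : Matrix m n ℝ) : ℝ :=
  ⨆ i, ⨆ j, |A i j|

/-- The stable rank `sr(A) = ‖A‖_F² / ‖A‖²`. -/
def stableRank {m n : Type*} [Fintype m] [Fintype n] [DecidableEq n] (A : Matrix m n ℝ) : ℝ :=
  frobNorm A ^ 2 / specNorm A ^ 2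

/-- The block coherence `Γ(A) = min(N·‖A‖_∞², ‖A‖²)` of an `N`-row block `A`. -/
def coherence {n d : Type*} [Fintype n] [Fintype d] [DecidableEq d] (A : Matrix n d ℝ) : ℝ :=
  min ((Fintype.card n : ℝ) * entrySup A ^ 2) (specNorm A ^ 2)

/-- The `j`-th row block of a matrix with `J·N` rows (rows indexed by `Fin J × Fin N`). -/
def rowBlock {J N : ℕ} {d : Type*} (U : Matrix (Fin J × Fin N) d ℝ) (j : Fin J) :
    Matrix (Fin N) d ℝ :=
  Matrix.of fun n c => U (j, n) c

/-- The block diagonal matrix with diagonal blocks `S j : Matrix (Fin (M j)) (Fin N) ℝ`. -/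
def blockDiag {J N : ℕ} {M : Fin J → ℕ} (S : (j : Fin J) → Fin (M j) → Fin N → ℝ) :
    Matrix ((j : Fin J) × Fin (M j)) (Fin J × Fin N) ℝ :=
  Matrix.of fun q r => if q.1 = r.1 then S q.1 q.2 r.2 else 0

/-- The distribution of the diagonal blocks: block `j` has i.i.d. `N(0, 1/M j)` entries, and all
blocks are mutually independent. -/
def blockGaussian (J N : ℕ) (M : Fin J → ℕ) :
    Measure ((j : Fin J) → Fin (M j) → Fin N → ℝ) :=
  Measure.pi fun j => Measure.pi fun _ => Measure.pi fun _ =>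
    gaussianReal 0 (1 / (M j : ℝ≥0))

end


lemma col_le_spec {m n : Type*} [Fintype m] [Fintype n] [DecidableEq n]
    (A : Matrix m n ℝ) (c : n) : ∑ i, A i c ^ 2 ≤ specNorm A ^ 2 := by
  set T := LinearMap.toContinuousLinearMap (Matrix.toEuclideanLin A) with hT
  set v : EuclideanSpace ℝ n := EuclideanSpace.single c (1:ℝ) with hv
  have h1 : ‖T v‖ ≤ specNorm A := by
    calc ‖T v‖ ≤ ‖T‖ * ‖v‖ := T.le_opNorm _
    _ = specNorm A := by simp [specNorm, hv, EuclideanSpace.norm_single, hT]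
  have hTv : T v = (WithLp.equiv 2 (m → ℝ)).symm (fun i => A i c) := by
    have : T v = Matrix.toEuclideanLin A v := rfl
    rw [this, Matrix.toEuclideanLin_apply]
    congr 1
    rw [show v.ofLp = Pi.single c 1 from rfl]
    ext i
    simp [Matrix.mulVec_single]
  have h2 : ‖T v‖ ^ 2 = ∑ i, A i c ^ 2 := by
    rw [hTv, EuclideanSpace.norm_eq, Real.sq_sqrt (by positivity)]
    simp [sq_abs]
  have h0 := norm_nonneg (T v)
  nlinarith

lemma entry_le_entrySup {m n : Type*} [Fintype m] [Fintype n] (A : Matrix m n ℝ)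
    (i : m) (j : n) : |A i j| ≤ entrySup A := by
  have h1 : |A i j| ≤ ⨆ j', |A i j'| :=
    le_ciSup (Set.Finite.bddAbove (Set.finite_range fun j' => |A i j'|)) j
  have h2 : (⨆ j', |A i j'|) ≤ entrySup A :=
    le_ciSup (Set.Finite.bddAbove (Set.finite_range fun i' => ⨆ j', |A i' j'|)) i
  exact h1.trans h2

theorem statement7 {J N d : ℕ} (hd : 1 ≤ d) (U : Matrix (Fin J × Fin N) (Fin d) ℝ)
    (hU : Uᵀ * U = 1) :
    (1 : ℝ) / (J : ℝ) ≤ ⨆ j : Fin J, coherence (rowBlock U j) := by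
  have hd0 : (0:ℝ) < d := by exact_mod_cast hd
  -- column normalization
  have h1 : ∀ c : Fin d, ∑ p : Fin J × Fin N, U p c ^ 2 = 1 := by
    intro c
    have := congrFun (congrFun hU c) c
    simp only [Matrix.mul_apply, Matrix.transpose_apply, Matrix.one_apply_eq] at this
    simpa [pow_two] using this
  have hJ : 0 < J := by
    by_contra h
    push_neg at h
    interval_cases J
    have := h1 ⟨0, hd⟩
    simp at this
  haveI : NeZero J := ⟨hJ.ne'⟩
  have hJR : (0:ℝ) < J := by exact_mod_cast hJ
  set S : Fin J → ℝ := fun j => ∑ n, ∑ c, U (j, n) c ^ 2 with hS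
  have hsum : ∑ j, S j = (d : ℝ) := by
    have h2 : ∑ j, S j = ∑ c : Fin d, ∑ p : Fin J × Fin N, U p c ^ 2 := by
      calc ∑ j, S j = ∑ j : Fin J, ∑ c : Fin d, ∑ n : Fin N, U (j, n) c ^ 2 :=
            Finset.sum_congr rfl fun j _ => Finset.sum_comm
      _ = ∑ c : Fin d, ∑ j : Fin J, ∑ n : Fin N, U (j, n) c ^ 2 := Finset.sum_comm
      _ = ∑ c : Fin d, ∑ p : Fin J × Fin N, U p c ^ 2 := by
            refine Finset.sum_congr rfl fun c _ => ?_
            exact (Fintype.sum_prod_type (fun p : Fin J × Fin N => U p c ^ 2)).symm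
    rw [h2]
    simp [h1]
  -- some block has Frobenius mass ≥ d / J
  obtain ⟨j0, -, hj0⟩ : ∃ j ∈ Finset.univ, (d:ℝ) / J ≤ S j := by
    apply Finset.exists_le_of_sum_le Finset.univ_nonempty
    rw [hsum]
    simp [Finset.sum_const, mul_div_assoc]
    rw [mul_div_cancel₀ _ hJR.ne']
  set B := rowBlock U j0 with hB
  have hSB : S j0 = ∑ n, ∑ c, B n c ^ 2 := rfl
  have hspec0 : 0 ≤ specNorm B := norm_nonneg _
  have hent0 : 0 ≤ entrySup B := by
    rcases Nat.eq_zero_or_pos N with hN | hN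
    · subst hN
      simp [entrySup, Real.iSup_of_isEmpty]
    · haveI : NeZero N := ⟨hN.ne'⟩
      exact le_trans (abs_nonneg _) (entry_le_entrySup B ⟨0, hN⟩ ⟨0, hd⟩)
  -- spectral bound
  have hb1 : S j0 ≤ (d:ℝ) * specNorm B ^ 2 := by
    rw [hSB, Finset.sum_comm]
    calc ∑ c, ∑ n, B n c ^ 2 ≤ ∑ _c : Fin d, specNorm B ^ 2 :=
          Finset.sum_le_sum fun c _ => col_le_spec B c
    _ = (d:ℝ) * specNorm B ^ 2 := by simp [Finset.sum_const, nsmul_eq_mul]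
  -- entrywise bound
  have hb2 : S j0 ≤ (N:ℝ) * (d:ℝ) * entrySup B ^ 2 := by
    rw [hSB]
    calc ∑ n, ∑ c, B n c ^ 2 ≤ ∑ _n : Fin N, ∑ _c : Fin d, entrySup B ^ 2 := by
          refine Finset.sum_le_sum fun n _ => Finset.sum_le_sum fun c _ => ?_
          rw [← sq_abs]
          exact pow_le_pow_left₀ (abs_nonneg _) (entry_le_entrySup B n c) 2
    _ = (N:ℝ) * (d:ℝ) * entrySup B ^ 2 := by
          simp [Finset.sum_const, nsmul_eq_mul]; ring
  have hdiv : (1:ℝ) / J ≤ S j0 / d := by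
    rw [div_le_div_iff₀ hJR hd0]
    calc (1:ℝ) * d = d := one_mul (d:ℝ)
    _ ≤ S j0 * J := by
        rw [div_le_iff₀ hJR] at hj0
        linarith
  have key : (1:ℝ) / J ≤ coherence B := by
    refine le_min ?_ ?_
    · refine hdiv.trans ?_
      rw [div_le_iff₀ hd0]
      simpa [Fintype.card_fin, mul_comm, mul_assoc, mul_left_comm] using hb2
    · refine hdiv.trans ?_
      rw [div_le_iff₀ hd0]
      linarith
  refine key.trans ?_
  exact le_ciSup (Set.Finite.bddAbove (Set.finite_range fun j => coherence (rowBlock U j))) j0
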